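/- Under the same hypotheses (distinct reals p_1 < ... < p_m, positive weights r_i, H_m the Hankel matrix of t_k = Σ r_l p_l^k), for all i, j: 1/r_j - 1/r_i = (𝐩_j + 𝐩_i) H_m^{-1} (𝐩_j - 𝐩_i)^T, where 𝐩_i = (1, p_i, ..., p_i^{m-1}). -/

import Mathlib

open Matrix

theorem stmt_5 (m : ℕ) (p r : Fin m → ℝ) (hp : StrictMono p) (hr : ∀ i, 0 < r i)
    (t : ℕ → ℝ) (ht : ∀ k, t k = ∑ l, r l * p l ^ k)
    (H : Matrix (Fin m) (Fin m) ℝ)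
    (hH : H = Matrix.of fun i j : Fin m => t ((i : ℕ) + (j : ℕ)))
    (hinv : IsUnit H.det) (i j : Fin m) :
    dotProduct
        ((fun n : Fin m => p j ^ (n : ℕ)) + (fun n : Fin m => p i ^ (n : ℕ)))
        (H⁻¹.mulVec ((fun n : Fin m => p j ^ (n : ℕ)) - (fun n : Fin m => p i ^ (n : ℕ)))) =
      (r j)⁻¹ - (r i)⁻¹ := by
  set V := Matrix.vandermonde p with hV
  have hVdet : V.det ≠ 0 := by
    rw [Matrix.det_vandermonde]
    apply Finset.prod_ne_zero_iff.2
    intro a _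
    apply Finset.prod_ne_zero_iff.2
    intro b hb
    have : a < b := Finset.mem_Ioi.1 hb
    exact sub_ne_zero.2 (hp this).ne'
  have hVunit : IsUnit V.det := isUnit_iff_ne_zero.2 hVdet
  have hVTunit : IsUnit Vᵀ.det := by rwa [Matrix.det_transpose]
  -- H = Vᵀ * diagonal r * V
  have hH' : H = Vᵀ * Matrix.diagonal r * V := by
    subst hH
    ext a b
    simp only [Matrix.mul_apply, Matrix.transpose_apply, Matrix.diagonal_apply,
      Matrix.of_apply, Matrix.vandermonde_apply, hV, ht, mul_ite, mul_zero,
      Finset.sum_ite_eq', Finset.mem_univ, if_true]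
    exact Finset.sum_congr rfl fun l _ => by rw [pow_add]; ring
  have hrne : ∀ l, r l ≠ 0 := fun l => (hr l).ne'
  have hDinv : (Matrix.diagonal r)⁻¹ = Matrix.diagonal (fun l => (r l)⁻¹) :=
    Matrix.inv_eq_right_inv (by
      rw [Matrix.diagonal_mul_diagonal]
      convert Matrix.diagonal_one with l
      exact mul_inv_cancel₀ (hrne l))
  have hHinv : H⁻¹ = V⁻¹ * Matrix.diagonal (fun l => (r l)⁻¹) * (Vᵀ)⁻¹ := by
    rw [hH', Matrix.mul_inv_rev, Matrix.mul_inv_rev, hDinv, Matrix.mul_assoc]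
  have hkey : V * H⁻¹ * Vᵀ = Matrix.diagonal (fun l => (r l)⁻¹) := by
    rw [hHinv, ← Matrix.mul_assoc, ← Matrix.mul_assoc,
      Matrix.mul_nonsing_inv _ hVunit, Matrix.one_mul, Matrix.mul_assoc,
      Matrix.nonsing_inv_mul _ hVTunit, Matrix.mul_one]
  -- express the two vectors
  have hvec : ∀ a : Fin m, (fun n : Fin m => p a ^ (n : ℕ)) = Vᵀ.mulVec (Pi.single a 1) := by
    intro a
    funext n
    simp [Matrix.mulVec, dotProduct, Pi.single_apply, hV,
      Matrix.vandermonde_apply, Finset.sum_ite_eq', mul_comm]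
  rw [hvec i, hvec j, ← Matrix.mulVec_add, ← Matrix.mulVec_sub]
  set u := (Pi.single j 1 + Pi.single i 1 : Fin m → ℝ)
  set v := (Pi.single j 1 - Pi.single i 1 : Fin m → ℝ)
  have h1 : dotProduct (Vᵀ.mulVec u) (H⁻¹.mulVec (Vᵀ.mulVec v))
      = dotProduct u ((V * H⁻¹ * Vᵀ).mulVec v) := by
    rw [Matrix.mulVec_transpose, ← Matrix.dotProduct_mulVec, Matrix.mulVec_mulVec,
      Matrix.mulVec_mulVec]
  rw [h1, hkey]
  rcases eq_or_ne i j with h | h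
  · subst h
    simp [v]
  · have hji : j ≠ i := Ne.symm h
    have huj : u j = 1 := by simp [u, Pi.single_apply, hji]
    have hui : u i = 1 := by simp [u, Pi.single_apply, h]
    have hvj : v j = 1 := by simp [v, Pi.single_apply, hji]
    have hvi : v i = -1 := by simp [v, Pi.single_apply, h]
    rw [add_dotProduct, single_dotProduct, single_dotProduct]
    simp [Matrix.mulVec_diagonal, hvj, hvi]
    ring
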